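/- For integers $1 \le j \le n-1$, $\sum_{i=j}^{n-1} \binom{i-1}{j-1}\binom{n}{i-1} = \binom{n}{j-1}\left(2^{n-j+1} - (n-j+2)\right)$. -/

import Mathlib

open Finset

lemma nat_version (p m : ℕ) :
    ∑ i ∈ Finset.Icc (p + 1) (p + 1 + m),
        (i - 1).choose p * ((p + 1 + m + 1).choose (i - 1))
      = (p + 1 + m + 1).choose p * (2 ^ (m + 2) - (m + 3)) := by
  have h1 : ∑ i ∈ Finset.Icc (p + 1) (p + 1 + m),
      (i - 1).choose p * ((p + 1 + m + 1).choose (i - 1))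
      = ∑ t ∈ Finset.range (m + 1), (p + 1 + m + 1).choose p * ((m + 2).choose t) := by
    rw [← Finset.Ico_add_one_right_eq_Icc, Finset.sum_Ico_eq_sum_range]
    have hr : p + 1 + m + 1 - (p + 1) = m + 1 := by omega
    rw [hr]
    refine Finset.sum_congr rfl fun t ht => ?_
    have h1 : p + 1 + t - 1 = p + t := by omega
    rw [h1, mul_comm]
    have := Nat.choose_mul (n := p + 1 + m + 1) (k := p + t) (s := p)
      (by omega)
    have h2 : p + t - p = t := by omega
    have h3 : p + 1 + m + 1 - p = m + 2 := by omega
    rw [h2, h3] at this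
    exact this
  rw [h1, ← Finset.mul_sum]
  congr 1
  have hsum : ∑ t ∈ Finset.range (m + 3), (m + 2).choose t = 2 ^ (m + 2) :=
    Nat.sum_range_choose (m + 2)
  have hsplit : ∑ t ∈ Finset.range (m + 3), (m + 2).choose t
      = ∑ t ∈ Finset.range (m + 1), (m + 2).choose t
        + ((m + 2).choose (m + 1) + (m + 2).choose (m + 2)) := by
    rw [Finset.sum_range_succ, Finset.sum_range_succ]; ring
  have hc1 : (m + 2).choose (m + 1) = m + 2 := by
    have := Nat.choose_symm (show 1 ≤ m + 2 by omega)
    simp [this]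
  have hc2 : (m + 2).choose (m + 2) = 1 := Nat.choose_self _
  omega

theorem stmt_18 (n j : ℕ) (hj : 1 ≤ j) (hjn : j ≤ n - 1) :
    ∑ i ∈ Finset.Icc j (n - 1), ((i - 1).choose (j - 1) : ℝ) * (n.choose (i - 1))
      = (n.choose (j - 1) : ℝ) * (2 ^ (n - j + 1) - ((n : ℝ) - j + 2)) := by
  obtain ⟨p, rfl⟩ : ∃ p, j = p + 1 := ⟨j - 1, by omega⟩
  obtain ⟨m, rfl⟩ : ∃ m, n = p + 1 + m + 1 := ⟨n - p - 2, by omega⟩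
  have key := nat_version p m
  have h1 : p + 1 + m + 1 - 1 = p + 1 + m := by omega
  have h2 : p + 1 - 1 = p := by omega
  have h3 : p + 1 + m + 1 - (p + 1) + 1 = m + 2 := by omega
  rw [h1, h2, h3]
  have hcast : (∑ i ∈ Finset.Icc (p + 1) (p + 1 + m),
      ((i - 1).choose p : ℝ) * ((p + 1 + m + 1).choose (i - 1)))
      = ((∑ i ∈ Finset.Icc (p + 1) (p + 1 + m),
        (i - 1).choose p * ((p + 1 + m + 1).choose (i - 1)) : ℕ) : ℝ) := by
    push_cast; rfl
  rw [hcast, key]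
  have hle : m + 3 ≤ 2 ^ (m + 2) := by
    calc m + 3 ≤ 2 * (m + 2) - 1 := by omega
    _ ≤ 2 ^ (m + 2) := by
        have := Nat.lt_two_pow_self (n := m + 1)
        have h2p : 2 ^ (m + 2) = 2 * 2 ^ (m + 1) := by ring
        omega
  push_cast [hle]
  ring
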